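/- Indices u and v are strongly cospectral with respect to a Hermitian matrix H if and only if there exists a unitary matrix R which is a polynomial in H, commutes with H, and satisfies R eᵤ = eᵥ. -/

import Mathlib

open Matrix Polynomial

namespace Stmt12Aux

variable {m r : ℕ}

noncomputable def phi (E : Fin r → Matrix (Fin m) (Fin m) ℂ) (a : Fin r → ℂ) :
    Matrix (Fin m) (Fin m) ℂ := ∑ j, a j • E j

lemma sum_mulVec (f : Fin r → Matrix (Fin m) (Fin m) ℂ) (x : Fin m → ℂ) :
    (∑ j, f j) *ᵥ x = ∑ j, f j *ᵥ x := by
  funext i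
  simp only [Matrix.mulVec, dotProduct, Finset.sum_apply, Matrix.sum_apply, Finset.sum_mul]
  rw [Finset.sum_comm]

lemma phi_mul_E (E : Fin r → Matrix (Fin m) (Fin m) ℂ)
    (hEidem : ∀ j, E j * E j = E j)
    (hEorth : ∀ j k, j ≠ k → E j * E k = 0)
    (a : Fin r → ℂ) (k : Fin r) : phi E a * E k = a k • E k := by
  unfold phi
  rw [Finset.sum_mul, Finset.sum_eq_single k]
  · rw [smul_mul_assoc, hEidem]
  · intro j _ hj; rw [smul_mul_assoc, hEorth j k hj, smul_zero]
  · simp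

lemma E_mul_phi (E : Fin r → Matrix (Fin m) (Fin m) ℂ)
    (hEidem : ∀ j, E j * E j = E j)
    (hEorth : ∀ j k, j ≠ k → E j * E k = 0)
    (a : Fin r → ℂ) (k : Fin r) : E k * phi E a = a k • E k := by
  unfold phi
  rw [Finset.mul_sum, Finset.sum_eq_single k]
  · rw [mul_smul_comm, hEidem]
  · intro j _ hj; rw [mul_smul_comm, hEorth k j (Ne.symm hj), smul_zero]
  · simp

lemma phi_mul (E : Fin r → Matrix (Fin m) (Fin m) ℂ)
    (hEidem : ∀ j, E j * E j = E j)
    (hEorth : ∀ j k, j ≠ k → E j * E k = 0)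
    (a b : Fin r → ℂ) : phi E a * phi E b = phi E (a * b) := by
  have h1 : phi E a * phi E b = ∑ k, b k • (phi E a * E k) := by
    conv_lhs => rw [show phi E b = ∑ k, b k • E k from rfl]
    rw [Finset.mul_sum]
    exact Finset.sum_congr rfl fun k _ => (mul_smul_comm _ _ _)
  rw [h1, show phi E (a * b) = ∑ k, (a * b) k • E k from rfl]
  refine Finset.sum_congr rfl fun k _ => ?_
  rw [phi_mul_E E hEidem hEorth, smul_smul, Pi.mul_apply, mul_comm]

noncomputable def phiHom (E : Fin r → Matrix (Fin m) (Fin m) ℂ)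
    (hEidem : ∀ j, E j * E j = E j)
    (hEorth : ∀ j k, j ≠ k → E j * E k = 0)
    (hEsum : ∑ j, E j = 1) : (Fin r → ℂ) →ₐ[ℂ] Matrix (Fin m) (Fin m) ℂ where
  toFun := phi E
  map_one' := by simp [phi, hEsum]
  map_mul' := fun x y => (phi_mul E hEidem hEorth x y).symm
  map_zero' := by simp [phi]
  map_add' := by intro a b; simp [phi, add_smul, Finset.sum_add_distrib]
  commutes' := by
    intro c
    simp only [Algebra.algebraMap_eq_smul_one]
    simp [phi, ← Finset.smul_sum, hEsum, smul_smul]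

lemma phi_inj (E : Fin r → Matrix (Fin m) (Fin m) ℂ)
    (hEidem : ∀ j, E j * E j = E j)
    (hEorth : ∀ j k, j ≠ k → E j * E k = 0)
    (hEnz : ∀ j, E j ≠ 0)
    {a b : Fin r → ℂ} (h : phi E a = phi E b) : a = b := by
  funext k
  have h2 : a k • E k = b k • E k := by
    rw [← phi_mul_E E hEidem hEorth a k, ← phi_mul_E E hEidem hEorth b k, h]
  by_contra hne
  have : (a k - b k) • E k = 0 := by rw [sub_smul, h2, sub_self]
  rcases smul_eq_zero.mp this with h3 | h3
  · exact hne (sub_eq_zero.mp h3)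
  · exact hEnz k h3

lemma aeval_phi (E : Fin r → Matrix (Fin m) (Fin m) ℂ)
    (hEidem : ∀ j, E j * E j = E j)
    (hEorth : ∀ j k, j ≠ k → E j * E k = 0)
    (hEsum : ∑ j, E j = 1)
    (x : Fin r → ℂ) (p : ℂ[X]) :
    aeval (phi E x) p = phi E (fun j => p.eval (x j)) := by
  have h1 := aeval_algHom_apply (phiHom E hEidem hEorth hEsum) x p
  have h2 : aeval x p = fun j => p.eval (x j) := by
    funext j
    have := aeval_algHom_apply (Pi.evalAlgHom ℂ (fun _ : Fin r => ℂ) j) x p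
    simpa using this.symm
  rw [show phiHom E hEidem hEorth hEsum x = phi E x from rfl] at h1
  rw [h1, h2]; rfl

lemma phi_conjTranspose (E : Fin r → Matrix (Fin m) (Fin m) ℂ)
    (hEherm : ∀ j, (E j).IsHermitian)
    (a : Fin r → ℂ) : (phi E a)ᴴ = phi E (star a) := by
  unfold phi
  rw [conjTranspose_sum]
  refine Finset.sum_congr rfl fun j _ => ?_
  rw [conjTranspose_smul, (hEherm j).eq]
  rfl

end Stmt12Aux

open Stmt12Aux

theorem stmt12 {m r : ℕ} (H : Matrix (Fin m) (Fin m) ℂ)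
    (lam : Fin r → ℝ) (E : Fin r → Matrix (Fin m) (Fin m) ℂ)
    (hH : H.IsHermitian)
    (hlam : Function.Injective lam)
    (hEherm : ∀ j, (E j).IsHermitian)
    (hEidem : ∀ j, E j * E j = E j)
    (hEorth : ∀ j k, j ≠ k → E j * E k = 0)
    (hEsum : ∑ j, E j = 1)
    (hEnz : ∀ j, E j ≠ 0)
    (hspec : H = ∑ j, (lam j : ℂ) • E j)
    (u v : Fin m) :
    (∀ j, ∃ c : ℂ, ‖c‖ = 1 ∧
        (E j) *ᵥ (Pi.single u 1 : Fin m → ℂ) = c • ((E j) *ᵥ (Pi.single v 1 : Fin m → ℂ)))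
      ↔ ∃ R : Matrix (Fin m) (Fin m) ℂ,
          (∃ p : Polynomial ℂ, R = Polynomial.aeval H p) ∧
          R * H = H * R ∧ Rᴴ * R = 1 ∧ R * Rᴴ = 1 ∧
          R *ᵥ (Pi.single u 1 : Fin m → ℂ) = Pi.single v 1 := by
  set eu : Fin m → ℂ := Pi.single u 1
  set ev : Fin m → ℂ := Pi.single v 1
  set lam' : Fin r → ℂ := fun j => (lam j : ℂ) with hlam'
  have hHphi : H = phi E lam' := hspec
  have hlam'inj : Function.Injective lam' := by
    intro i j h
    have h' : ((lam i : ℝ) : ℂ) = ((lam j : ℝ) : ℂ) := h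
    exact hlam (Complex.ofReal_injective h')
  constructor
  · rintro h
    choose c hc1 hc2 using h
    set a : Fin r → ℂ := fun j => star (c j) with ha
    have hca : ∀ j, c j * a j = 1 := by
      intro j
      show c j * star (c j) = 1
      rw [Complex.star_def, Complex.mul_conj, Complex.normSq_eq_norm_sq, hc1 j]
      norm_num
    have hsa : star a * a = 1 := by
      funext j
      have h1 : star (a j) = c j := by simp [ha]
      simp only [Pi.mul_apply, Pi.star_apply, Pi.one_apply]
      rw [h1]; exact hca j
    have has : a * star a = 1 := by
      rw [mul_comm]; exact hsa
    refine ⟨phi E a, ?_, ?_, ?_, ?_, ?_⟩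
    · refine ⟨Lagrange.interpolate Finset.univ lam' a, ?_⟩
      rw [hHphi, aeval_phi E hEidem hEorth hEsum]
      have : (fun j => (Lagrange.interpolate Finset.univ lam' a).eval (lam' j)) = a := by
        funext j
        exact Lagrange.eval_interpolate_at_node a (Set.injOn_of_injective hlam'inj)
          (Finset.mem_univ j)
      rw [this]
    · rw [hHphi, phi_mul E hEidem hEorth, phi_mul E hEidem hEorth, mul_comm]
    · rw [phi_conjTranspose E hEherm, phi_mul E hEidem hEorth, hsa]
      exact _root_.map_one (phiHom E hEidem hEorth hEsum)
    · rw [phi_conjTranspose E hEherm, phi_mul E hEidem hEorth, has]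
      exact _root_.map_one (phiHom E hEidem hEorth hEsum)
    · show (∑ j, a j • E j) *ᵥ eu = ev
      rw [Stmt12Aux.sum_mulVec]
      have hterm : ∀ j : Fin r, (a j • E j) *ᵥ eu = E j *ᵥ ev := by
        intro j
        rw [smul_mulVec, hc2 j, smul_smul, mul_comm, hca j, one_smul]
      rw [Finset.sum_congr rfl fun j _ => hterm j, ← Stmt12Aux.sum_mulVec, hEsum, one_mulVec]
  · rintro ⟨R, ⟨p, hp⟩, hcomm, hRhR, hRRh, hRu⟩
    set a : Fin r → ℂ := fun j => p.eval (lam' j) with ha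
    have hR : R = phi E a := by
      rw [hp, hHphi, aeval_phi E hEidem hEorth hEsum]
    have hunit : ∀ j, star (a j) * a j = 1 := by
      have h1 : phi E (star a * a) = phi E 1 := by
        rw [← phi_mul E hEidem hEorth, ← phi_conjTranspose E hEherm, ← hR, hRhR]
        exact (_root_.map_one (phiHom E hEidem hEorth hEsum)).symm
      have h2 := phi_inj E hEidem hEorth hEnz h1
      intro j
      exact congrFun h2 j
    intro j
    refine ⟨star (a j), ?_, ?_⟩
    · have h1 : ‖a j‖ ^ 2 = 1 := by
        have h0 := hunit j
        rw [Complex.star_def, mul_comm, Complex.mul_conj] at h0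
        have : Complex.normSq (a j) = 1 := by exact_mod_cast h0
        rw [← Complex.sq_norm] at this
        exact this
      have h2 : ‖a j‖ = 1 := by
        nlinarith [norm_nonneg (a j)]
      simpa using h2
    · have hEv : E j *ᵥ ev = a j • (E j *ᵥ eu) := by
        rw [← hRu, Matrix.mulVec_mulVec, hR, E_mul_phi E hEidem hEorth,
          smul_mulVec]
      rw [hEv, smul_smul, hunit j, one_smul]
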